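/- Let ζ ∈ ℂ be a primitive 7th root of unity. For a, b ∈ ℤ/7ℤ let V_{a,b} ⊆ ℂ^{ℤ/7ℤ} be the subspace of all points z of the form z(i) = ζ^{b·i}·y(i+a) for some y : ℤ/7ℤ → ℂ with y(−i) = y(i) for all i. Then the forty-nine subspaces V_{a,b} together span ℂ^{ℤ/7ℤ}. -/

import Mathlib

/-- The forty-nine subspaces `V_{a,b}` (Heisenberg translates of the
symmetric subspace `{y : y(−i) = y(i)}`) together span `ℂ^{ℤ/7ℤ}`. -/
theorem heisenberg_translates_span
    (ζ : ℂ) (hζ : IsPrimitiveRoot ζ 7) :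
    Submodule.span ℂ
        {z : ZMod 7 → ℂ | ∃ a b : ZMod 7, ∃ y : ZMod 7 → ℂ,
          (∀ i, y (-i) = y i) ∧ ∀ i, z i = ζ ^ (b * i).val * y (i + a)} = ⊤ := by
  set S : Set (ZMod 7 → ℂ) :=
    {z : ZMod 7 → ℂ | ∃ a b : ZMod 7, ∃ y : ZMod 7 → ℂ,
      (∀ i, y (-i) = y i) ∧ ∀ i, z i = ζ ^ (b * i).val * y (i + a)} with hS
  -- each "delta at j" lies in the span
  have key : ∀ j : ZMod 7, (fun i => if j = i then (1:ℂ) else 0) ∈ Submodule.span ℂ S := by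
    intro j
    by_cases hj : j = 0
    · -- the delta at 0 is itself symmetric, hence in S
      apply Submodule.subset_span
      refine ⟨0, 0, fun i => if j = i then (1:ℂ) else 0, ?_, ?_⟩
      · intro i
        subst hj
        simp [eq_comm, neg_eq_zero]
      · intro i
        simp
    · -- j ≠ 0 : use two Heisenberg translates of the symmetric bump at ±j
      set y : ZMod 7 → ℂ := fun i => if i = j ∨ i = -j then 1 else 0 with hy
      have hsym : ∀ i, y (-i) = y i := by
        intro i
        simp only [hy]
        congr 1
        simp only [eq_iff_iff]
        constructor
        · rintro (h | h)
          · right; rw [← h, neg_neg]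
          · left; exact neg_injective h
        · rintro (h | h)
          · right; rw [h]
          · left; rw [h, neg_neg]
      have hmem : ∀ b : ZMod 7, (fun i => ζ ^ ((b*i).val) * y i) ∈ S := by
        intro b
        exact ⟨0, b, y, hsym, fun i => by rw [add_zero]⟩
      have hjj : j ≠ -j := by
        intro h
        apply hj
        have : ∀ x : ZMod 7, x = -x → x = 0 := by decide
        exact this j h
      have hd : ζ ^ (j.val) - ζ ^ ((-j).val) ≠ 0 := by
        intro h
        rw [sub_eq_zero] at h
        have hv := hζ.pow_inj (ZMod.val_lt j) (ZMod.val_lt (-j)) h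
        exact hjj (ZMod.val_injective 7 hv)
      -- set up the coefficients
      set d : ℂ := ζ ^ (j.val) - ζ ^ ((-j).val) with hdd
      have hrep : (fun i => if j = i then (1:ℂ) else 0)
          = d⁻¹ • (fun i => ζ ^ (((1:ZMod 7)*i).val) * y i)
            + (-(d⁻¹ * ζ ^ ((-j).val))) • (fun i => ζ ^ (((0:ZMod 7)*i).val) * y i) := by
        funext i
        simp only [Pi.add_apply, Pi.smul_apply, smul_eq_mul, one_mul, zero_mul]
        rw [ZMod.val_zero]
        by_cases h1 : i = j
        · subst h1
          rw [if_pos rfl]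
          simp only [hy, if_pos (Or.inl rfl)]
          field_simp
          ring
        · rw [if_neg (fun h => h1 h.symm)]
          by_cases h2 : i = -j
          · subst h2
            simp only [hy, if_pos (Or.inr rfl)]
            field_simp
            ring
          · simp only [hy, if_neg (not_or.mpr ⟨h1, h2⟩)]
            ring
      rw [hrep]
      exact Submodule.add_mem _
        (Submodule.smul_mem _ _ (Submodule.subset_span (hmem 1)))
        (Submodule.smul_mem _ _ (Submodule.subset_span (hmem 0)))
  rw [Submodule.eq_top_iff']
  intro x
  rw [pi_eq_sum_univ x]
  exact Submodule.sum_mem _ fun j _ => Submodule.smul_mem _ _ (key j)
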